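/- arXiv:2107.06699 — 8 statements merged into one kernel-verified Lean document; each statement's English description precedes it below -/
import Mathlib

section
/- Autonomous radial dynamics for the underwater bank: let a > b > 0, let γ, h be nonzero real constants and set 𝔥 = h². Let (ρ(t), φ(t), u(t), v(t)) be a differentiable solution of the Hamilton equations for the polar Hamiltonian 𝓗 on an open interval I, with ρ(t) > 0 and (u(t), v(t)) ≠ (0,0), such that v ≡ γ and 𝓗 ≡ γ/h along the solution. Then for all t ∈ I: (ρ(t) ρ̇(t))² · (ρ(t)² + a)² = (ρ(t)² + b) · (ρ(t)²(ρ(t)² + a) − (ρ(t)² + b)𝔥). -/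
/-- The underwater-bank Hamiltonian in polar coordinates
`𝓗(ρ, φ, u, v) = √(u² + v²/ρ²) · √((ρ² + b)/(ρ² + a))` (independent of `φ`). -/
noncomputable def polarH (a b ρ φ u v : ℝ) : ℝ :=
  Real.sqrt (u ^ 2 + v ^ 2 / ρ ^ 2) * Real.sqrt ((ρ ^ 2 + b) / (ρ ^ 2 + a))

/-- Autonomous radial dynamics for the underwater bank: along a solution with `v ≡ γ`
and `𝓗 ≡ γ/h`, setting `𝔥 = h²`, the radius satisfies
`(ρρ̇)²(ρ² + a)² = (ρ² + b)(ρ²(ρ² + a) − (ρ² + b)𝔥)`. -/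
theorem bank_autonomous_radial_dynamics (a b γ h : ℝ) (hab : a > b) (hb : b > 0)
    (hγ : γ ≠ 0) (hh : h ≠ 0) (𝔥 : ℝ) (h𝔥 : 𝔥 = h ^ 2)
    (t₁ t₂ : ℝ) (ρ φ u v : ℝ → ℝ)
    (hρpos : ∀ t ∈ Set.Ioo t₁ t₂, ρ t > 0)
    (huv : ∀ t ∈ Set.Ioo t₁ t₂, (u t, v t) ≠ (0, 0))
    (hρ : ∀ t ∈ Set.Ioo t₁ t₂, HasDerivAt ρ
      (deriv (fun q => polarH a b (ρ t) (φ t) q (v t)) (u t)) t)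
    (hφ : ∀ t ∈ Set.Ioo t₁ t₂, HasDerivAt φ
      (deriv (fun q => polarH a b (ρ t) (φ t) (u t) q) (v t)) t)
    (hu : ∀ t ∈ Set.Ioo t₁ t₂, HasDerivAt u
      (-(deriv (fun q => polarH a b q (φ t) (u t) (v t)) (ρ t))) t)
    (hv : ∀ t ∈ Set.Ioo t₁ t₂, HasDerivAt v
      (-(deriv (fun q => polarH a b (ρ t) q (u t) (v t)) (φ t))) t)
    (hvγ : ∀ t ∈ Set.Ioo t₁ t₂, v t = γ)
    (hlevel : ∀ t ∈ Set.Ioo t₁ t₂, polarH a b (ρ t) (φ t) (u t) (v t) = γ / h) :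
    ∀ t ∈ Set.Ioo t₁ t₂,
      (ρ t * deriv ρ t) ^ 2 * (ρ t ^ 2 + a) ^ 2
        = (ρ t ^ 2 + b) * (ρ t ^ 2 * (ρ t ^ 2 + a) - (ρ t ^ 2 + b) * 𝔥) := by
  intro t ht
  set P := ρ t with hP
  set U := u t with hU
  have hPpos : P > 0 := hρpos t ht
  have hvt : v t = γ := hvγ t ht
  have hP2 : P ^ 2 > 0 := by positivity
  have haP : P ^ 2 + a > 0 := by nlinarith
  have hbP : P ^ 2 + b > 0 := by nlinarith
  -- S and R
  set S : ℝ := U ^ 2 + γ ^ 2 / P ^ 2 with hSdef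
  set R : ℝ := (P ^ 2 + b) / (P ^ 2 + a) with hRdef
  have hSpos : S > 0 := by
    rw [hSdef]; positivity
  have hRpos : R > 0 := by positivity
  set s : ℝ := Real.sqrt S with hsdef
  set r : ℝ := Real.sqrt R with hrdef
  have hspos : s > 0 := Real.sqrt_pos.mpr hSpos
  have hrpos : r > 0 := Real.sqrt_pos.mpr hRpos
  have hs2 : s ^ 2 = S := Real.sq_sqrt hSpos.le
  have hr2 : r ^ 2 = R := Real.sq_sqrt hRpos.le
  -- the level constraint
  have hE : s * r = γ / h := by
    have := hlevel t ht
    rw [polarH, hvt] at this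
    exact this
  -- compute deriv ρ t
  have hderiv : deriv ρ t = U / s * r := by
    have h1 : HasDerivAt (fun q : ℝ => q ^ 2 + γ ^ 2 / P ^ 2) (2 * U) U := by
      simpa using (hasDerivAt_pow 2 U).add_const (γ ^ 2 / P ^ 2)
    have h2 : HasDerivAt (fun q : ℝ => Real.sqrt (q ^ 2 + γ ^ 2 / P ^ 2))
        (2 * U / (2 * s)) U := h1.sqrt (by rw [← hSdef]; exact hSpos.ne')
    have h3 : HasDerivAt (fun q : ℝ => polarH a b P (φ t) q (v t))
        (2 * U / (2 * s) * r) U := by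
      simp only [polarH, hvt]
      exact h2.mul_const r
    have h4 := (hρ t ht)
    rw [h3.deriv] at h4
    rw [h4.deriv]
    field_simp
  rw [hderiv, h𝔥]
  -- polynomial forms of the constraints
  have e1 : r ^ 2 * (P ^ 2 + a) = P ^ 2 + b := by
    rw [hr2, hRdef]; field_simp
  have e2 : s ^ 2 * P ^ 2 = U ^ 2 * P ^ 2 + γ ^ 2 := by
    rw [hs2, hSdef]; field_simp
  have e3 : s ^ 2 * r ^ 2 * h ^ 2 = γ ^ 2 := by
    have : (s * r) ^ 2 = (γ / h) ^ 2 := by rw [hE]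
    field_simp at this
    nlinarith [this]
  have hsne : s ≠ 0 := hspos.ne'
  field_simp
  linear_combination (P ^ 2 * U ^ 2 * (P ^ 2 + a) - s ^ 2 * h ^ 2 * (P ^ 2 + b)) * e1
    - (P ^ 2 + a) * (P ^ 2 + b) * e2 + (P ^ 2 + a) * (P ^ 2 + b) * e3
end

section
/- Angular dynamics for the underwater bank: let a > b > 0 and let γ, h be nonzero real constants. Let (ρ(t), φ(t), u(t), v(t)) be a differentiable solution of the Hamilton equations for the polar Hamiltonian 𝓗 on an open interval I, with ρ(t) > 0 and (u(t), v(t)) ≠ (0,0), such that v ≡ γ and 𝓗 ≡ γ/h along the solution. Then for all t ∈ I: φ̇(t) = (h/ρ(t)²) · (ρ(t)² + b)/(ρ(t)² + a). -/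
/-- Angular dynamics for the underwater bank: along a solution with `v ≡ γ` and
`𝓗 ≡ γ/h`, the angle satisfies `φ̇ = (h/ρ²)·(ρ² + b)/(ρ² + a)`. -/
theorem bank_angular_dynamics (a b γ h : ℝ) (hab : a > b) (hb : b > 0)
    (hγ : γ ≠ 0) (hh : h ≠ 0)
    (t₁ t₂ : ℝ) (ρ φ u v : ℝ → ℝ)
    (hρpos : ∀ t ∈ Set.Ioo t₁ t₂, ρ t > 0)
    (huv : ∀ t ∈ Set.Ioo t₁ t₂, (u t, v t) ≠ (0, 0))
    (hρ : ∀ t ∈ Set.Ioo t₁ t₂, HasDerivAt ρ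
      (deriv (fun q => polarH a b (ρ t) (φ t) q (v t)) (u t)) t)
    (hφ : ∀ t ∈ Set.Ioo t₁ t₂, HasDerivAt φ
      (deriv (fun q => polarH a b (ρ t) (φ t) (u t) q) (v t)) t)
    (hu : ∀ t ∈ Set.Ioo t₁ t₂, HasDerivAt u
      (-(deriv (fun q => polarH a b q (φ t) (u t) (v t)) (ρ t))) t)
    (hv : ∀ t ∈ Set.Ioo t₁ t₂, HasDerivAt v
      (-(deriv (fun q => polarH a b (ρ t) q (u t) (v t)) (φ t))) t)
    (hvγ : ∀ t ∈ Set.Ioo t₁ t₂, v t = γ)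
    (hlevel : ∀ t ∈ Set.Ioo t₁ t₂, polarH a b (ρ t) (φ t) (u t) (v t) = γ / h) :
    ∀ t ∈ Set.Ioo t₁ t₂,
      HasDerivAt φ (h / ρ t ^ 2 * ((ρ t ^ 2 + b) / (ρ t ^ 2 + a))) t := by
  intro t ht
  have hR : ρ t > 0 := hρpos t ht
  have hRne : ρ t ≠ 0 := ne_of_gt hR
  have hvt : v t = γ := hvγ t ht
  have hlev : Real.sqrt (u t ^ 2 + γ ^ 2 / ρ t ^ 2) *
      Real.sqrt ((ρ t ^ 2 + b) / (ρ t ^ 2 + a)) = γ / h := by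
    have := hlevel t ht
    rw [polarH, hvt] at this
    exact this
  have ha : (0:ℝ) < a := lt_trans hb hab
  have hS : (0:ℝ) < u t ^ 2 + γ ^ 2 / ρ t ^ 2 := by positivity
  have hKpos : (0:ℝ) < (ρ t ^ 2 + b) / (ρ t ^ 2 + a) := by positivity
  set s := Real.sqrt (u t ^ 2 + γ ^ 2 / ρ t ^ 2) with hs
  set c := Real.sqrt ((ρ t ^ 2 + b) / (ρ t ^ 2 + a)) with hc
  have hspos : 0 < s := Real.sqrt_pos.mpr hS
  have hcpos : 0 < c := Real.sqrt_pos.mpr hKpos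
  have hc2 : c ^ 2 = (ρ t ^ 2 + b) / (ρ t ^ 2 + a) := Real.sq_sqrt hKpos.le
  have hinner : HasDerivAt (fun q : ℝ => u t ^ 2 + q ^ 2 / ρ t ^ 2)
      (2 * γ / ρ t ^ 2) γ := by
    have h1 : HasDerivAt (fun q : ℝ => q ^ 2) (2 * γ) γ := by
      simpa using hasDerivAt_pow 2 γ
    simpa using (h1.div_const (ρ t ^ 2)).const_add (u t ^ 2)
  have hsq := hinner.sqrt (ne_of_gt hS)
  have hD := hsq.mul_const (Real.sqrt ((ρ t ^ 2 + b) / (ρ t ^ 2 + a)))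
  have hDeq : deriv (fun q => polarH a b (ρ t) (φ t) (u t) q) γ =
      2 * γ / ρ t ^ 2 / (2 * s) * c := by
    have : (fun q => polarH a b (ρ t) (φ t) (u t) q) =
        fun q => Real.sqrt (u t ^ 2 + q ^ 2 / ρ t ^ 2) *
          Real.sqrt ((ρ t ^ 2 + b) / (ρ t ^ 2 + a)) := by
      funext q; rfl
    rw [this]
    exact hD.deriv
  have key : 2 * γ / ρ t ^ 2 / (2 * s) * c =
      h / ρ t ^ 2 * ((ρ t ^ 2 + b) / (ρ t ^ 2 + a)) := by
    rw [← hc2]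
    have hsc : s * c * h = γ := by
      field_simp at hlev
      linarith [hlev]
    field_simp
    linear_combination (-1 : ℝ) * hsc
  have hφd := hφ t ht
  rw [hvt, hDeq, key] at hφd
  exact hφd
end

section
/- Parametric verification of the bank radial solution: let a > b > 0 and 𝔥 ∈ ℝ, and set δ = (𝔥 + 2a − b)/3, α = (4/3)(𝔥² − 2(a − 2b)𝔥 + a² − ab + b²), β = (4/27)(𝔥 − a + 2b)(2𝔥² − 4(a − 2b)𝔥 + (2a − b)(a + b)). Let P : I → ℝ be differentiable on an open interval I with (P'(𝔭))² = 4P(𝔭)³ − αP(𝔭) − β, P(𝔭) + δ − a > 0, and P(𝔭) + δ > 0 for all 𝔭 ∈ I; let t : I → ℝ be differentiable with t'(𝔭) = P(𝔭) + δ. Define ρ(𝔭) = √(P(𝔭) + δ − a) and the derivative with respect to time dρ/dt := ρ'(𝔭)/t'(𝔭). Then for all 𝔭 ∈ I: (ρ · dρ/dt)² · (ρ² + a)² = (ρ² + b) · (ρ²(ρ² + a) − (ρ² + b)𝔥). -/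
/-- The radial coordinate `ρ(𝔭) = √(P(𝔭) + δ − a)` of the bank solution. -/
noncomputable def ρfun (P : ℝ → ℝ) (δ a : ℝ) : ℝ → ℝ :=
  fun 𝔭 => Real.sqrt (P 𝔭 + δ - a)

/-- Parametric verification of the bank radial solution: if `P` satisfies the
Weierstrass differential equation `(P')² = 4P³ − αP − β` (with the bank constants
`δ, α, β`) and time is related to the parameter by `t' = P + δ`, then
`ρ = √(P + δ − a)`, with `dρ/dt := ρ'(𝔭)/t'(𝔭)`, satisfies the autonomous radial
equation `(ρ·dρ/dt)²(ρ² + a)² = (ρ² + b)(ρ²(ρ² + a) − (ρ² + b)𝔥)`. -/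
theorem bank_radial_solution_param (a b 𝔥 δ α β : ℝ) (hab : a > b) (hb : b > 0)
    (hδ : δ = (𝔥 + 2 * a - b) / 3)
    (hα : α = (4 / 3) * (𝔥 ^ 2 - 2 * (a - 2 * b) * 𝔥 + a ^ 2 - a * b + b ^ 2))
    (hβ : β = (4 / 27) * (𝔥 - a + 2 * b) *
      (2 * 𝔥 ^ 2 - 4 * (a - 2 * b) * 𝔥 + (2 * a - b) * (a + b)))
    (𝔭₁ 𝔭₂ : ℝ) (P P' T : ℝ → ℝ)
    (hP : ∀ 𝔭 ∈ Set.Ioo 𝔭₁ 𝔭₂, HasDerivAt P (P' 𝔭) 𝔭)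
    (hPW : ∀ 𝔭 ∈ Set.Ioo 𝔭₁ 𝔭₂, (P' 𝔭) ^ 2 = 4 * (P 𝔭) ^ 3 - α * P 𝔭 - β)
    (hPa : ∀ 𝔭 ∈ Set.Ioo 𝔭₁ 𝔭₂, P 𝔭 + δ - a > 0)
    (hPδ : ∀ 𝔭 ∈ Set.Ioo 𝔭₁ 𝔭₂, P 𝔭 + δ > 0)
    (hT : ∀ 𝔭 ∈ Set.Ioo 𝔭₁ 𝔭₂, HasDerivAt T (P 𝔭 + δ) 𝔭) :
    ∀ 𝔭 ∈ Set.Ioo 𝔭₁ 𝔭₂,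
      (ρfun P δ a 𝔭 * (deriv (ρfun P δ a) 𝔭 / (P 𝔭 + δ))) ^ 2
          * (ρfun P δ a 𝔭 ^ 2 + a) ^ 2
        = (ρfun P δ a 𝔭 ^ 2 + b) *
          (ρfun P δ a 𝔭 ^ 2 * (ρfun P δ a 𝔭 ^ 2 + a) - (ρfun P δ a 𝔭 ^ 2 + b) * 𝔥) := by
  intro 𝔭 h𝔭
  have hx : P 𝔭 + δ - a > 0 := hPa 𝔭 h𝔭
  have hd : P 𝔭 + δ > 0 := hPδ 𝔭 h𝔭
  have hxne : P 𝔭 + δ - a ≠ 0 := ne_of_gt hx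
  have hsq : Real.sqrt (P 𝔭 + δ - a) ^ 2 = P 𝔭 + δ - a :=
    Real.sq_sqrt hx.le
  have hρ : HasDerivAt (ρfun P δ a) (P' 𝔭 / (2 * Real.sqrt (P 𝔭 + δ - a))) 𝔭 := by
    have h1 : HasDerivAt (fun 𝔭 => P 𝔭 + δ - a) (P' 𝔭) 𝔭 :=
      ((hP 𝔭 h𝔭).add_const δ).sub_const a
    exact h1.sqrt hxne
  have hderiv : deriv (ρfun P δ a) 𝔭 = P' 𝔭 / (2 * Real.sqrt (P 𝔭 + δ - a)) :=
    hρ.deriv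
  have hsne : Real.sqrt (P 𝔭 + δ - a) ≠ 0 := by positivity
  have hW := hPW 𝔭 h𝔭
  simp only [ρfun, hderiv, hsq]
  field_simp
  rw [hα, hβ] at hW
  rw [hδ] at hsq ⊢
  linear_combination ((P 𝔭 + (𝔥 + 2 * a - b) / 3) ^ 2) * hW
end

section
/- The explicit formulas of Proposition 1 satisfy the conservation law identically: let a > b > 0, ξ > 0, and ψ ∈ ℝ with sin ψ ≠ 0. Set γ = −ξ sin ψ, 𝔥 = ξ²(ξ² + a) sin²ψ/(ξ² + b), δ = (𝔥 + 2a − b)/3, α = (4/3)(𝔥² − 2(a − 2b)𝔥 + a² − ab + b²), β = (4/27)(𝔥 − a + 2b)(2𝔥² − 4(a − 2b)𝔥 + (2a − b)(a + b)). Let P : I → ℝ be differentiable with (P')² = 4P³ − αP − β and P + δ − a > 0 on I. Define ρ = √(P + δ − a), u = −(1/2)·√((ξ² + b)/(ξ² + a)) · P' / ((P + δ − a + b)·√(P + δ − a)), and v = γ. Then for all 𝔭 ∈ I: (u² + v²/ρ²)·(ρ² + b)/(ρ² + a) = γ²/𝔥 = (ξ² + b)/(ξ² + a). -/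
/-- The momentum `u(𝔭) = −(1/2)·√((ξ² + b)/(ξ² + a))·P'(𝔭)/((P(𝔭) + δ − a + b)·√(P(𝔭) + δ − a))`
of the bank solution of Proposition 1. -/
noncomputable def ufun (P P' : ℝ → ℝ) (δ a b ξ : ℝ) : ℝ → ℝ :=
  fun 𝔭 => -(1 / 2) * Real.sqrt ((ξ ^ 2 + b) / (ξ ^ 2 + a)) * P' 𝔭
    / ((P 𝔭 + δ - a + b) * Real.sqrt (P 𝔭 + δ - a))

/-- The explicit formulas of Proposition 1 satisfy the conservation law
`(u² + v²/ρ²)(ρ² + b)/(ρ² + a) = γ²/𝔥 = (ξ² + b)/(ξ² + a)` identically. -/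
theorem prop1_formulas_satisfy_conservation (a b ξ ψ γ 𝔥 δ α β : ℝ)
    (hab : a > b) (hb : b > 0) (hξ : ξ > 0) (hψ : Real.sin ψ ≠ 0)
    (hγ : γ = -ξ * Real.sin ψ)
    (h𝔥 : 𝔥 = ξ ^ 2 * (ξ ^ 2 + a) * Real.sin ψ ^ 2 / (ξ ^ 2 + b))
    (hδ : δ = (𝔥 + 2 * a - b) / 3)
    (hα : α = (4 / 3) * (𝔥 ^ 2 - 2 * (a - 2 * b) * 𝔥 + a ^ 2 - a * b + b ^ 2))
    (hβ : β = (4 / 27) * (𝔥 - a + 2 * b) *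
      (2 * 𝔥 ^ 2 - 4 * (a - 2 * b) * 𝔥 + (2 * a - b) * (a + b)))
    (𝔭₁ 𝔭₂ : ℝ) (P P' : ℝ → ℝ)
    (hP : ∀ 𝔭 ∈ Set.Ioo 𝔭₁ 𝔭₂, HasDerivAt P (P' 𝔭) 𝔭)
    (hPW : ∀ 𝔭 ∈ Set.Ioo 𝔭₁ 𝔭₂, (P' 𝔭) ^ 2 = 4 * (P 𝔭) ^ 3 - α * P 𝔭 - β)
    (hPa : ∀ 𝔭 ∈ Set.Ioo 𝔭₁ 𝔭₂, P 𝔭 + δ - a > 0) :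
    ∀ 𝔭 ∈ Set.Ioo 𝔭₁ 𝔭₂,
      (ufun P P' δ a b ξ 𝔭 ^ 2 + γ ^ 2 / ρfun P δ a 𝔭 ^ 2)
          * (ρfun P δ a 𝔭 ^ 2 + b) / (ρfun P δ a 𝔭 ^ 2 + a) = γ ^ 2 / 𝔥
      ∧ γ ^ 2 / 𝔥 = (ξ ^ 2 + b) / (ξ ^ 2 + a) := by
  intro 𝔭 h𝔭
  have ha : (0:ℝ) < a := hb.trans hab
  have hξa : ξ ^ 2 + a > 0 := by positivity
  have hξb : ξ ^ 2 + b > 0 := by positivity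
  have hs2 : Real.sin ψ ^ 2 > 0 := by positivity
  have h𝔥pos : 𝔥 > 0 := by
    rw [h𝔥]; exact div_pos (mul_pos (mul_pos (pow_pos hξ 2) hξa) hs2) hξb
  have hR : P 𝔭 + δ - a > 0 := hPa 𝔭 h𝔭
  have hsr : Real.sqrt (P 𝔭 + δ - a) ^ 2 = P 𝔭 + δ - a := Real.sq_sqrt hR.le
  have hsrpos : Real.sqrt (P 𝔭 + δ - a) > 0 := Real.sqrt_pos.mpr hR
  have hk : Real.sqrt ((ξ ^ 2 + b) / (ξ ^ 2 + a)) ^ 2 = (ξ ^ 2 + b) / (ξ ^ 2 + a) :=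
    Real.sq_sqrt (by positivity)
  have hW := hPW 𝔭 h𝔭
  -- key algebraic reformulation of the Weierstrass equation
  have hW' : P' 𝔭 ^ 2 = 4 * (P 𝔭 + δ - a) * (P 𝔭 + δ - a + b) * ((P 𝔭 + δ - a) + a)
      - 4 * 𝔥 * (P 𝔭 + δ - a + b) ^ 2 := by
    rw [hW, hα, hβ, hδ]; ring
  have hγ2 : γ ^ 2 = (ξ ^ 2 + b) / (ξ ^ 2 + a) * 𝔥 := by
    rw [hγ, h𝔥]; field_simp
  have hRb : P 𝔭 + δ - a + b > 0 := by linarith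
  have hRa : P 𝔭 + δ - a + a > 0 := by linarith
  constructor
  · -- conservation law
    have hu2 : ufun P P' δ a b ξ 𝔭 ^ 2
        = (ξ ^ 2 + b) / (ξ ^ 2 + a) * P' 𝔭 ^ 2
          / (4 * (P 𝔭 + δ - a + b) ^ 2 * (P 𝔭 + δ - a)) := by
      unfold ufun
      rw [div_pow, div_eq_div_iff (by positivity) (by positivity)]
      linear_combination (P' 𝔭 ^ 2 * (P 𝔭 + δ - a + b) ^ 2 * (P 𝔭 + δ - a)) * hk
        - ((ξ ^ 2 + b) / (ξ ^ 2 + a) * P' 𝔭 ^ 2 * (P 𝔭 + δ - a + b) ^ 2) * hsr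
    have hρ2 : ρfun P δ a 𝔭 ^ 2 = P 𝔭 + δ - a := hsr
    have hsum : (ξ ^ 2 + b) / (ξ ^ 2 + a) * P' 𝔭 ^ 2
          / (4 * (P 𝔭 + δ - a + b) ^ 2 * (P 𝔭 + δ - a))
        + (ξ ^ 2 + b) / (ξ ^ 2 + a) * 𝔥 / (P 𝔭 + δ - a)
        = (ξ ^ 2 + b) / (ξ ^ 2 + a) * (P 𝔭 + δ - a + a) / (P 𝔭 + δ - a + b) := by
      rw [div_add_div _ _ (by positivity) hR.ne',
        div_eq_div_iff (by positivity) hRb.ne']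
      linear_combination ((ξ ^ 2 + b) / (ξ ^ 2 + a) * (P 𝔭 + δ - a)
        * (P 𝔭 + δ - a + b)) * hW'
    rw [hu2, hρ2, hγ2, hsum, div_mul_cancel₀ _ hRb.ne',
      mul_div_assoc ((ξ ^ 2 + b) / (ξ ^ 2 + a)) (P 𝔭 + δ - a + a),
      div_self hRa.ne', mul_one, mul_div_assoc, div_self h𝔥pos.ne', mul_one]
  · rw [hγ2, mul_div_assoc, div_self h𝔥pos.ne', mul_one]
end

section
/- Parametric verification of the ridge x₁-solution: let a > b > 0 and 𝔥 > 1 with h = √𝔥, and set δ = ((b − a)𝔥 + 3a − 2b)/3, α = (4/3)((b − a)²𝔥² − (b − a)b𝔥 + b²), β = (4/27)((b − a)𝔥 + b)((b − a)𝔥 − 2b)(2(b − a)𝔥 − b). Let P : I → ℝ be differentiable on an open interval I with (P')² = 4P³ − αP − β, P + δ − a > 0, and P + δ > 0 on I; let t : I → ℝ be differentiable with t'(𝔭) = h·(P(𝔭) + δ). Define x₁(𝔭) = −√(P(𝔭) + δ − a) and dx₁/dt := x₁'(𝔭)/t'(𝔭). Then for all 𝔭 ∈ I: 𝔥 · (x₁²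 + a)² · (x₁ · dx₁/dt)² = x₁² · (x₁² + b) · (𝔥(x₁² + a) − (𝔥 − 1)(x₁² + b)). -/
/-- The coordinate `x₁(𝔭) = −√(P(𝔭) + δ − a)` of the ridge solution. -/
noncomputable def x1fun (P : ℝ → ℝ) (δ a : ℝ) : ℝ → ℝ :=
  fun 𝔭 => -Real.sqrt (P 𝔭 + δ - a)

/-- Parametric verification of the ridge `x₁`-solution: if `P` satisfies the
Weierstrass differential equation `(P')² = 4P³ − αP − β` (with the ridge constants
`δ, α, β`) and time is related to the parameter by `t' = h(P + δ)`, then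
`x₁ = −√(P + δ − a)`, with `dx₁/dt := x₁'(𝔭)/t'(𝔭)`, satisfies
`𝔥(x₁² + a)²(x₁·dx₁/dt)² = x₁²(x₁² + b)(𝔥(x₁² + a) − (𝔥 − 1)(x₁² + b))`. -/
theorem ridge_x1_solution_param (a b 𝔥 h δ α β : ℝ) (hab : a > b) (hb : b > 0)
    (h𝔥 : 𝔥 > 1) (hh : h = Real.sqrt 𝔥)
    (hδ : δ = ((b - a) * 𝔥 + 3 * a - 2 * b) / 3)
    (hα : α = (4 / 3) * ((b - a) ^ 2 * 𝔥 ^ 2 - (b - a) * b * 𝔥 + b ^ 2))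
    (hβ : β = (4 / 27) * ((b - a) * 𝔥 + b) * ((b - a) * 𝔥 - 2 * b) *
      (2 * (b - a) * 𝔥 - b))
    (𝔭₁ 𝔭₂ : ℝ) (P P' T : ℝ → ℝ)
    (hP : ∀ 𝔭 ∈ Set.Ioo 𝔭₁ 𝔭₂, HasDerivAt P (P' 𝔭) 𝔭)
    (hPW : ∀ 𝔭 ∈ Set.Ioo 𝔭₁ 𝔭₂, (P' 𝔭) ^ 2 = 4 * (P 𝔭) ^ 3 - α * P 𝔭 - β)
    (hPa : ∀ 𝔭 ∈ Set.Ioo 𝔭₁ 𝔭₂, P 𝔭 + δ - a > 0)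
    (hPδ : ∀ 𝔭 ∈ Set.Ioo 𝔭₁ 𝔭₂, P 𝔭 + δ > 0)
    (hT : ∀ 𝔭 ∈ Set.Ioo 𝔭₁ 𝔭₂, HasDerivAt T (h * (P 𝔭 + δ)) 𝔭) :
    ∀ 𝔭 ∈ Set.Ioo 𝔭₁ 𝔭₂,
      𝔥 * (x1fun P δ a 𝔭 ^ 2 + a) ^ 2
          * (x1fun P δ a 𝔭 * (deriv (x1fun P δ a) 𝔭 / (h * (P 𝔭 + δ)))) ^ 2
        = x1fun P δ a 𝔭 ^ 2 * (x1fun P δ a 𝔭 ^ 2 + b) *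
          (𝔥 * (x1fun P δ a 𝔭 ^ 2 + a) - (𝔥 - 1) * (x1fun P δ a 𝔭 ^ 2 + b)) := by
  intro 𝔭 h𝔭
  have hsa := hPa 𝔭 h𝔭
  have hsδ := hPδ 𝔭 h𝔭
  have h𝔥0 : (0:ℝ) < 𝔥 := lt_trans one_pos h𝔥
  have hh2 : h ^ 2 = 𝔥 := by rw [hh, sq, Real.mul_self_sqrt h𝔥0.le]
  have hhpos : 0 < h := by rw [hh]; exact Real.sqrt_pos.mpr h𝔥0
  set q := P 𝔭 with hq
  set q' := P' 𝔭 with hq'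
  have hsne : Real.sqrt (q + δ - a) ≠ 0 := ne_of_gt (Real.sqrt_pos.mpr hsa)
  have hx : HasDerivAt (x1fun P δ a) (-(1 / (2 * Real.sqrt (q + δ - a)) * q')) 𝔭 := by
    have h1 : HasDerivAt (fun p => P p + δ - a) q' 𝔭 := ((hP 𝔭 h𝔭).add_const δ).sub_const a
    have h2 := (Real.hasDerivAt_sqrt (ne_of_gt hsa)).comp 𝔭 h1
    exact h2.neg
  have hdx : deriv (x1fun P δ a) 𝔭 = -(1 / (2 * Real.sqrt (q + δ - a)) * q') := hx.deriv
  have hx2 : x1fun P δ a 𝔭 ^ 2 = q + δ - a := by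
    simp only [x1fun, neg_sq]
    exact Real.sq_sqrt hsa.le
  have key : x1fun P δ a 𝔭 * (deriv (x1fun P δ a) 𝔭 / (h * (q + δ)))
      = q' / (2 * (h * (q + δ))) := by
    rw [hdx]
    simp only [x1fun]
    field_simp
    ring
  rw [hx2, key]
  have hW := hPW 𝔭 h𝔭
  have hne : h * (q + δ) ≠ 0 := by positivity
  have lhs_eq : 𝔥 * (q + δ - a + a) ^ 2 * (q' / (2 * (h * (q + δ)))) ^ 2 = q' ^ 2 / 4 := by
    field_simp
    linear_combination (-(4 * q' ^ 2 * (q + δ) ^ 2)) * hh2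
  rw [lhs_eq, hW, hα, hβ, hδ]
  ring
end

section
/- Transverse velocity formula for the underwater ridge: let a > b > 0, 𝔥 > 1, h = √𝔥, and γ > 0. Let (x(t), p(t)) be a differentiable curve on an open interval I with p(t) ≠ 0, satisfying Hamilton's equations ẋᵢ = ∂H/∂pᵢ, ṗᵢ = −∂H/∂xᵢ for the ridge Hamiltonian H, and suppose p₂(t) ≡ γ and H(x(t), p(t)) ≡ γh/√(𝔥 − 1) along the curve. Then for all t ∈ I: ẋ₂(t) = √(1 − 𝔥⁻¹) · (x₁(t)² + b)/(x₁(t)² + a). -/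
/-- The underwater-ridge Hamiltonian
`H(x,p) = √(p₁² + p₂²) · √((x₁² + b)/(x₁² + a))` (independent of `x₂`). -/
noncomputable def ridgeH (a b x₁ x₂ p₁ p₂ : ℝ) : ℝ :=
  Real.sqrt (p₁ ^ 2 + p₂ ^ 2) * Real.sqrt ((x₁ ^ 2 + b) / (x₁ ^ 2 + a))

/-- Transverse velocity formula for the underwater ridge: along a solution with
`p₂ ≡ γ` and `H ≡ γh/√(𝔥 − 1)`, one has `ẋ₂ = √(1 − 𝔥⁻¹)·(x₁² + b)/(x₁² + a)`. -/
theorem ridge_transverse_velocity (a b 𝔥 h γ : ℝ) (hab : a > b) (hb : b > 0)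
    (h𝔥 : 𝔥 > 1) (hh : h = Real.sqrt 𝔥) (hγ : γ > 0)
    (t₁ t₂ : ℝ) (x₁ x₂ p₁ p₂ : ℝ → ℝ)
    (hp : ∀ t ∈ Set.Ioo t₁ t₂, (p₁ t, p₂ t) ≠ (0, 0))
    (hx₁ : ∀ t ∈ Set.Ioo t₁ t₂, HasDerivAt x₁
      (deriv (fun q => ridgeH a b (x₁ t) (x₂ t) q (p₂ t)) (p₁ t)) t)
    (hx₂ : ∀ t ∈ Set.Ioo t₁ t₂, HasDerivAt x₂
      (deriv (fun q => ridgeH a b (x₁ t) (x₂ t) (p₁ t) q) (p₂ t)) t)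
    (hp₁ : ∀ t ∈ Set.Ioo t₁ t₂, HasDerivAt p₁
      (-(deriv (fun q => ridgeH a b q (x₂ t) (p₁ t) (p₂ t)) (x₁ t))) t)
    (hp₂ : ∀ t ∈ Set.Ioo t₁ t₂, HasDerivAt p₂
      (-(deriv (fun q => ridgeH a b (x₁ t) q (p₁ t) (p₂ t)) (x₂ t))) t)
    (hp₂γ : ∀ t ∈ Set.Ioo t₁ t₂, p₂ t = γ)
    (hlevel : ∀ t ∈ Set.Ioo t₁ t₂,
      ridgeH a b (x₁ t) (x₂ t) (p₁ t) (p₂ t) = γ * h / Real.sqrt (𝔥 - 1)) :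
    ∀ t ∈ Set.Ioo t₁ t₂,
      HasDerivAt x₂ (Real.sqrt (1 - 𝔥⁻¹) * ((x₁ t ^ 2 + b) / (x₁ t ^ 2 + a))) t := by

  intro t ht
  have ha : a > 0 := hb.trans hab
  have hX2a : (x₁ t) ^ 2 + a > 0 := by positivity
  have hX2b : (x₁ t) ^ 2 + b > 0 := by positivity
  have hRpos : 0 < ((x₁ t) ^ 2 + b) / ((x₁ t) ^ 2 + a) := div_pos hX2b hX2a
  have hc : 0 < Real.sqrt (((x₁ t) ^ 2 + b) / ((x₁ t) ^ 2 + a)) := Real.sqrt_pos.2 hRpos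
  have hs : (p₁ t) ^ 2 + γ ^ 2 > 0 := by positivity
  set c := Real.sqrt (((x₁ t) ^ 2 + b) / ((x₁ t) ^ 2 + a)) with hcdef
  set s := Real.sqrt ((p₁ t) ^ 2 + γ ^ 2) with hsdef
  have hspos : 0 < s := Real.sqrt_pos.2 hs
  have hd : HasDerivAt (fun q => ridgeH a b (x₁ t) (x₂ t) (p₁ t) q) (γ / s * c) γ := by
    have h1 : HasDerivAt (fun q : ℝ => (p₁ t) ^ 2 + q ^ 2) (2 * γ) γ := by
      simpa using ((hasDerivAt_id γ).pow 2).const_add ((p₁ t) ^ 2)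
    have h2 := (h1.sqrt (ne_of_gt hs)).mul_const c
    have : 2 * γ / (2 * s) * c = γ / s * c := by
      rw [mul_div_mul_left _ _ (by norm_num : (2:ℝ) ≠ 0)]
    have h3 : HasDerivAt (fun q => ridgeH a b (x₁ t) (x₂ t) (p₁ t) q) (2 * γ / (2 * s) * c) γ := h2
    rwa [this] at h3
  have hlev : s * c = γ * h / Real.sqrt (𝔥 - 1) := by
    have := hlevel t ht
    rw [hp₂γ t ht] at this
    simpa [ridgeH, hsdef, hcdef] using this
  have hh1 : 0 < Real.sqrt (𝔥 - 1) := Real.sqrt_pos.2 (by linarith)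
  have hhpos : 0 < h := hh ▸ Real.sqrt_pos.2 (by linarith)
  have hc2 : c ^ 2 = ((x₁ t) ^ 2 + b) / ((x₁ t) ^ 2 + a) := Real.sq_sqrt hRpos.le
  have key : γ / s * c = Real.sqrt (1 - 𝔥⁻¹) * (((x₁ t) ^ 2 + b) / ((x₁ t) ^ 2 + a)) := by
    have hsq : Real.sqrt (1 - 𝔥⁻¹) = Real.sqrt (𝔥 - 1) / h := by
      rw [hh, ← Real.sqrt_div' _ (by linarith)]
      congr 1
      field_simp
    have hseq : s = γ * h / (Real.sqrt (𝔥 - 1) * c) := by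
      field_simp at hlev ⊢
      linarith [hlev]
    rw [hseq, hsq, ← hc2]
    field_simp
  have := hx₂ t ht
  rw [hp₂γ t ht, hd.deriv, key] at this
  exact this
end

section
/- Parametric verification of the ridge x₂-formula: let a > b > 0, 𝔥 > 1, h = √𝔥, and set δ = ((b − a)𝔥 + 3a − 2b)/3, α = (4/3)((b − a)²𝔥² − (b − a)b𝔥 + b²), β = (4/27)((b − a)𝔥 + b)((b − a)𝔥 − 2b)(2(b − a)𝔥 − b). Let P : I → ℝ be differentiable with (P')² = 4P³ − αP − β, P + δ − a > 0 and P + δ > 0 on I; let t : I → ℝ be differentiable with t'(𝔭) = h·(P(𝔭) + δ), fix 𝔭₀ ∈ I, and define x₁(𝔭)² = P(𝔭) + δ − a and x₂(𝔭) = √(1 − 𝔥⁻¹) · t(𝔭) + √(𝔥 − 1)·(b − a)·(𝔭 − 𝔭₀). Then for all 𝔭 ∈ I: x₂'(𝔭)/t'(𝔭) = √(1 − 𝔥⁻¹) · (x₁(𝔭)² + b)/(x₁(𝔭)² + a); that is, x₂ as a function of time satisfies ẋ₂ = √(1 − 𝔥⁻¹)(x₁² + b)/(x₁² + a). -/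
/-- The squared coordinate `x₁(𝔭)² = P(𝔭) + δ − a` of the ridge solution. -/
noncomputable def x1sq (P : ℝ → ℝ) (δ a : ℝ) : ℝ → ℝ :=
  fun 𝔭 => P 𝔭 + δ - a

/-- The coordinate `x₂(𝔭) = √(1 − 𝔥⁻¹)·t(𝔭) + √(𝔥 − 1)(b − a)(𝔭 − 𝔭₀)` of the
ridge solution of Proposition 2. -/
noncomputable def x2fun (T : ℝ → ℝ) (𝔥 b a 𝔭₀ : ℝ) : ℝ → ℝ :=
  fun 𝔭 => Real.sqrt (1 - 𝔥⁻¹) * T 𝔭 + Real.sqrt (𝔥 - 1) * (b - a) * (𝔭 - 𝔭₀)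

/-- Parametric verification of the ridge `x₂`-formula: with time related to the
parameter by `t'(𝔭) = h(P(𝔭) + δ)`, the function
`x₂(𝔭) = √(1 − 𝔥⁻¹)·t(𝔭) + √(𝔥 − 1)(b − a)(𝔭 − 𝔭₀)` satisfies
`x₂'(𝔭)/t'(𝔭) = √(1 − 𝔥⁻¹)·(x₁² + b)/(x₁² + a)` where `x₁² = P + δ − a`;
i.e. as a function of time it satisfies `ẋ₂ = √(1 − 𝔥⁻¹)(x₁² + b)/(x₁² + a)`. -/
theorem ridge_x2_solution_param (a b 𝔥 h δ α β : ℝ) (hab : a > b) (hb : b > 0)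
    (h𝔥 : 𝔥 > 1) (hh : h = Real.sqrt 𝔥)
    (hδ : δ = ((b - a) * 𝔥 + 3 * a - 2 * b) / 3)
    (hα : α = (4 / 3) * ((b - a) ^ 2 * 𝔥 ^ 2 - (b - a) * b * 𝔥 + b ^ 2))
    (hβ : β = (4 / 27) * ((b - a) * 𝔥 + b) * ((b - a) * 𝔥 - 2 * b) *
      (2 * (b - a) * 𝔥 - b))
    (𝔭₁ 𝔭₂ : ℝ) (P P' T : ℝ → ℝ)
    (hP : ∀ 𝔭 ∈ Set.Ioo 𝔭₁ 𝔭₂, HasDerivAt P (P' 𝔭) 𝔭)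
    (hPW : ∀ 𝔭 ∈ Set.Ioo 𝔭₁ 𝔭₂, (P' 𝔭) ^ 2 = 4 * (P 𝔭) ^ 3 - α * P 𝔭 - β)
    (hPa : ∀ 𝔭 ∈ Set.Ioo 𝔭₁ 𝔭₂, P 𝔭 + δ - a > 0)
    (hPδ : ∀ 𝔭 ∈ Set.Ioo 𝔭₁ 𝔭₂, P 𝔭 + δ > 0)
    (hT : ∀ 𝔭 ∈ Set.Ioo 𝔭₁ 𝔭₂, HasDerivAt T (h * (P 𝔭 + δ)) 𝔭)
    (𝔭₀ : ℝ) (h𝔭₀ : 𝔭₀ ∈ Set.Ioo 𝔭₁ 𝔭₂) :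
    ∀ 𝔭 ∈ Set.Ioo 𝔭₁ 𝔭₂,
      deriv (x2fun T 𝔥 b a 𝔭₀) 𝔭 / (h * (P 𝔭 + δ))
        = Real.sqrt (1 - 𝔥⁻¹) * ((x1sq P δ a 𝔭 + b) / (x1sq P δ a 𝔭 + a)) := by

  intro 𝔭 h𝔭
  have h𝔥0 : (0:ℝ) < 𝔥 := lt_trans one_pos h𝔥
  have hh0 : 0 < h := hh ▸ Real.sqrt_pos.mpr h𝔥0
  have hPδ' := hPδ 𝔭 h𝔭
  have hden : h * (P 𝔭 + δ) ≠ 0 := by positivity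
  have hsq : Real.sqrt (𝔥 - 1) = Real.sqrt (1 - 𝔥⁻¹) * h := by
    rw [hh, ← Real.sqrt_mul (by rw [sub_nonneg, inv_le_one_iff₀]; right; exact h𝔥.le)]
    congr 1
    field_simp
  have hd : HasDerivAt (x2fun T 𝔥 b a 𝔭₀)
      (Real.sqrt (1 - 𝔥⁻¹) * (h * (P 𝔭 + δ)) + Real.sqrt (𝔥 - 1) * (b - a) * 1) 𝔭 := by
    exact ((hT 𝔭 h𝔭).const_mul _).add (((hasDerivAt_id 𝔭).sub_const 𝔭₀).const_mul _)
  rw [hd.deriv, x1sq, hsq]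
  have : P 𝔭 + δ - a + a = P 𝔭 + δ := by ring
  field_simp [this, hPδ'.ne']
  ring
end

section
/- Autonomous dynamics for x₁ in the underwater-ridge system: let a > b > 0, 𝔥 > 1, and let γ ≠ 0. Let (x(t), p(t)) be a differentiable curve on an open interval I with p(t) ≠ 0, satisfying Hamilton's equations ẋᵢ = ∂H/∂pᵢ, ṗᵢ = −∂H/∂xᵢ for the ridge Hamiltonian H, with p₂ ≡ γ and H(x(t), p(t))² ≡ γ²𝔥/(𝔥 − 1) along the curve. Then for all t ∈ I: 𝔥 · (x₁(t)² + a)² · ẋ₁(t)² = (x₁(t)² + b) · (𝔥(x₁(t)² + a) − (𝔥 − 1)(x₁(t)² + b)). -/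
/-- Autonomous dynamics for `x₁` in the underwater-ridge system: along a solution
with `p₂ ≡ γ` and `H² ≡ γ²𝔥/(𝔥 − 1)`, one has
`𝔥(x₁² + a)²ẋ₁² = (x₁² + b)(𝔥(x₁² + a) − (𝔥 − 1)(x₁² + b))`. -/
theorem ridge_autonomous_x1_dynamics (a b 𝔥 γ : ℝ) (hab : a > b) (hb : b > 0)
    (h𝔥 : 𝔥 > 1) (hγ : γ ≠ 0)
    (t₁ t₂ : ℝ) (x₁ x₂ p₁ p₂ : ℝ → ℝ)
    (hp : ∀ t ∈ Set.Ioo t₁ t₂, (p₁ t, p₂ t) ≠ (0, 0))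
    (hx₁ : ∀ t ∈ Set.Ioo t₁ t₂, HasDerivAt x₁
      (deriv (fun q => ridgeH a b (x₁ t) (x₂ t) q (p₂ t)) (p₁ t)) t)
    (hx₂ : ∀ t ∈ Set.Ioo t₁ t₂, HasDerivAt x₂
      (deriv (fun q => ridgeH a b (x₁ t) (x₂ t) (p₁ t) q) (p₂ t)) t)
    (hp₁ : ∀ t ∈ Set.Ioo t₁ t₂, HasDerivAt p₁
      (-(deriv (fun q => ridgeH a b q (x₂ t) (p₁ t) (p₂ t)) (x₁ t))) t)
    (hp₂ : ∀ t ∈ Set.Ioo t₁ t₂, HasDerivAt p₂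
      (-(deriv (fun q => ridgeH a b (x₁ t) q (p₁ t) (p₂ t)) (x₂ t))) t)
    (hp₂γ : ∀ t ∈ Set.Ioo t₁ t₂, p₂ t = γ)
    (hlevel : ∀ t ∈ Set.Ioo t₁ t₂,
      (ridgeH a b (x₁ t) (x₂ t) (p₁ t) (p₂ t)) ^ 2 = γ ^ 2 * 𝔥 / (𝔥 - 1)) :
    ∀ t ∈ Set.Ioo t₁ t₂,
      𝔥 * (x₁ t ^ 2 + a) ^ 2 * (deriv x₁ t) ^ 2
        = (x₁ t ^ 2 + b) * (𝔥 * (x₁ t ^ 2 + a) - (𝔥 - 1) * (x₁ t ^ 2 + b)) := by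

  intro t ht
  have hQ : p₂ t = γ := hp₂γ t ht
  set X := x₁ t with hX
  set P := p₁ t with hP
  have hA : (0:ℝ) < X ^ 2 + a := by nlinarith [sq_nonneg X]
  have hB : (0:ℝ) < X ^ 2 + b := by positivity
  have hS : (0:ℝ) < P ^ 2 + (p₂ t) ^ 2 := by
    rw [hQ]; positivity
  -- derivative of the Hamiltonian in p₁
  have hder : deriv (fun q => ridgeH a b X (x₂ t) q (p₂ t)) P
      = P / Real.sqrt (P ^ 2 + (p₂ t) ^ 2)
        * Real.sqrt ((X ^ 2 + b) / (X ^ 2 + a)) := by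
    have h1 : HasDerivAt (fun q : ℝ => q ^ 2 + (p₂ t) ^ 2) (2 * P) P := by
      simpa using (hasDerivAt_pow 2 P).add_const ((p₂ t) ^ 2)
    have h2 : HasDerivAt (fun q : ℝ => Real.sqrt (q ^ 2 + (p₂ t) ^ 2))
        (1 / (2 * Real.sqrt (P ^ 2 + (p₂ t) ^ 2)) * (2 * P)) P :=
      (Real.hasDerivAt_sqrt (ne_of_gt hS)).comp P h1
    have h3 := (h2.mul_const (Real.sqrt ((X ^ 2 + b) / (X ^ 2 + a)))).deriv
    have hsne : Real.sqrt (P ^ 2 + (p₂ t) ^ 2) ≠ 0 :=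
      ne_of_gt (Real.sqrt_pos.mpr hS)
    rw [show (fun q => ridgeH a b X (x₂ t) q (p₂ t))
        = fun q : ℝ => Real.sqrt (q ^ 2 + (p₂ t) ^ 2)
          * Real.sqrt ((X ^ 2 + b) / (X ^ 2 + a)) from rfl, h3]
    field_simp
  have hdx : deriv x₁ t = P / Real.sqrt (P ^ 2 + (p₂ t) ^ 2)
      * Real.sqrt ((X ^ 2 + b) / (X ^ 2 + a)) := by
    rw [(hx₁ t ht).deriv, hder]
  have hsq : (deriv x₁ t) ^ 2
      = P ^ 2 / (P ^ 2 + (p₂ t) ^ 2) * ((X ^ 2 + b) / (X ^ 2 + a)) := by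
    rw [hdx, mul_pow, div_pow, Real.sq_sqrt hS.le,
      Real.sq_sqrt (by positivity : (0:ℝ) ≤ (X ^ 2 + b) / (X ^ 2 + a))]
  -- level set relation
  have hlev := hlevel t ht
  rw [show ridgeH a b (x₁ t) (x₂ t) (p₁ t) (p₂ t)
      = Real.sqrt (P ^ 2 + (p₂ t) ^ 2)
        * Real.sqrt ((X ^ 2 + b) / (X ^ 2 + a)) from rfl, mul_pow,
    Real.sq_sqrt hS.le,
    Real.sq_sqrt (by positivity : (0:ℝ) ≤ (X ^ 2 + b) / (X ^ 2 + a))] at hlev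
  have h𝔥' : 𝔥 - 1 ≠ 0 := by linarith
  have hrel : (P ^ 2 + γ ^ 2) * (X ^ 2 + b) * (𝔥 - 1) = γ ^ 2 * 𝔥 * (X ^ 2 + a) := by
    rw [hQ] at hlev
    field_simp at hlev
    linarith [hlev]
  rw [hsq, hQ]
  have hSγ : P ^ 2 + γ ^ 2 ≠ 0 := by rw [hQ] at hS; exact ne_of_gt hS
  field_simp
  linear_combination hrel
end
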